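/- Compatibility of the triangular Gibbons–Tsarev system of the Benney chain: for m ≥ 1 define g_m(x, u) = x^{m−1} − Σ_{k=1}^{m−2} k·u_k·x^{m−2−k} in variables x and u = (u_1, u_2, …) (so g_1 = 1). Then for every m ≥ 1 the expression E_m(x, y, u) = (∂g_m/∂x)(x,u)/(y − x) + Σ_{k=1}^{m−2} (∂g_m/∂u_k)(x,u)·g_k(y,u) + 2·g_m(x,u)/(x − y)² is symmetric under interchanging x and y: E_m(x, y, u) = E_m(y, x, u) for all x ≠ y and all u. (Equivalently, the relations ∂_i u_m = g_m(p_i, u) ∂_i u_1 are compatible with the Gibbons–Tsarev equations ∂_i p_j = ∂_i u_1/(p_i − p_j), ∂_i ∂_j u_1 = 2 ∂_i u_1 ∂_j u_1/(p_i − p_j)².) -/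

import Mathlib

/-- The Benney coefficient `g_m(x,u) = x^{m−1} − Σ_{k=1}^{m−2} k u_k x^{m−2−k}`. -/
noncomputable def gB (m : ℕ) (x : ℝ) (u : ℕ → ℝ) : ℝ :=
  x ^ (m - 1) - ∑ k ∈ Finset.Icc 1 (m - 2), (k : ℝ) * u k * x ^ (m - 2 - k)

/-- The compatibility expression
`E_m(x,y,u) = (∂g_m/∂x)(x,u)/(y−x) + Σ_{k=1}^{m−2} (∂g_m/∂u_k)(x,u) g_k(y,u)
  + 2 g_m(x,u)/(x−y)²`. -/
noncomputable def EB (m : ℕ) (x y : ℝ) (u : ℕ → ℝ) : ℝ :=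
  deriv (fun s => gB m s u) x / (y - x)
    + (∑ k ∈ Finset.Icc 1 (m - 2),
        deriv (fun t => gB m x (Function.update u k t)) (u k) * gB k y u)
    + 2 * gB m x u / (x - y) ^ 2

/-- Explicit `x`-derivative of `gB`. -/
noncomputable def DgB (m : ℕ) (x : ℝ) (u : ℕ → ℝ) : ℝ :=
  ((m - 1 : ℕ) : ℝ) * x ^ (m - 1 - 1)
    - ∑ k ∈ Finset.Icc 1 (m - 2),
        (k : ℝ) * u k * (((m - 2 - k : ℕ) : ℝ) * x ^ (m - 2 - k - 1))

/-- The explicit sum `Σ (∂g_m/∂u_k)(x) g_k(y)`. -/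
noncomputable def SB (m : ℕ) (x y : ℝ) (u : ℕ → ℝ) : ℝ :=
  ∑ k ∈ Finset.Icc 1 (m - 2), (-((k : ℝ) * x ^ (m - 2 - k))) * gB k y u

lemma hasDerivAt_gB (m : ℕ) (x : ℝ) (u : ℕ → ℝ) :
    HasDerivAt (fun s => gB m s u) (DgB m x u) x := by
  unfold gB DgB
  exact (hasDerivAt_pow _ x).sub
    (HasDerivAt.fun_sum fun k _ => ((hasDerivAt_pow _ x).const_mul _))

lemma deriv_gB (m : ℕ) (x : ℝ) (u : ℕ → ℝ) :
    deriv (fun s => gB m s u) x = DgB m x u :=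
  (hasDerivAt_gB m x u).deriv

lemma deriv_u (m k : ℕ) (hk : k ∈ Finset.Icc 1 (m - 2)) (x : ℝ) (u : ℕ → ℝ) :
    deriv (fun t => gB m x (Function.update u k t)) (u k)
      = -((k : ℝ) * x ^ (m - 2 - k)) := by
  have hfe : (fun t => gB m x (Function.update u k t))
      = fun t => (x ^ (m - 1)
          - ∑ j ∈ (Finset.Icc 1 (m - 2)).erase k, (j : ℝ) * u j * x ^ (m - 2 - j))
          - ((k : ℝ) * x ^ (m - 2 - k)) * t := by
    funext t
    unfold gB
    rw [← Finset.add_sum_erase _ _ hk]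
    have hupd : ∀ j ∈ (Finset.Icc 1 (m - 2)).erase k,
        (j : ℝ) * (Function.update u k t j) * x ^ (m - 2 - j)
          = (j : ℝ) * u j * x ^ (m - 2 - j) := by
      intro j hj
      rw [Function.update_of_ne (Finset.ne_of_mem_erase hj)]
    rw [Finset.sum_congr rfl hupd, Function.update_self]
    ring
  rw [hfe]
  have h : HasDerivAt
      (fun t : ℝ => (x ^ (m - 1)
        - ∑ j ∈ (Finset.Icc 1 (m - 2)).erase k, (j : ℝ) * u j * x ^ (m - 2 - j))
        - ((k : ℝ) * x ^ (m - 2 - k)) * t)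
      (-((k : ℝ) * x ^ (m - 2 - k))) (u k) := by
    have := (((hasDerivAt_id (u k)).const_mul ((k : ℝ) * x ^ (m - 2 - k))).const_sub
      (x ^ (m - 1)
        - ∑ j ∈ (Finset.Icc 1 (m - 2)).erase k, (j : ℝ) * u j * x ^ (m - 2 - j)))
    refine this.congr_deriv ?_
    ring
  exact h.deriv

lemma sum_eq_SB (m : ℕ) (x y : ℝ) (u : ℕ → ℝ) :
    (∑ k ∈ Finset.Icc 1 (m - 2),
        deriv (fun t => gB m x (Function.update u k t)) (u k) * gB k y u)
      = SB m x y u := by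
  unfold SB
  exact Finset.sum_congr rfl fun k hk => by rw [deriv_u m k hk]

lemma grec (m : ℕ) (hm : 1 ≤ m) (x : ℝ) (u : ℕ → ℝ) :
    gB (m + 1) x u = x * gB m x u - ((m : ℝ) - 1) * u (m - 1) := by
  obtain ⟨n, rfl⟩ : ∃ n, m = n + 1 := ⟨m - 1, by omega⟩
  cases n with
  | zero => simp [gB]
  | succ n =>
    unfold gB
    have h1 : n + 1 + 1 + 1 - 2 = n + 1 := by omega
    have h2 : n + 1 + 1 - 2 = n := by omega
    have h3 : n + 1 + 1 + 1 - 1 = n + 2 := by omega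
    have h4 : n + 1 + 1 - 1 = n + 1 := by omega
    rw [h1, h2, h3, h4, Finset.sum_Icc_succ_top (by omega : 1 ≤ n + 1)]
    have hsum : ∀ k ∈ Finset.Icc 1 n,
        (k : ℝ) * u k * x ^ (n + 1 - k) = x * ((k : ℝ) * u k * x ^ (n - k)) := by
      intro k hk
      have hk' : k ≤ n := (Finset.mem_Icc.mp hk).2
      have : n + 1 - k = (n - k) + 1 := by omega
      rw [this, pow_succ]
      ring
    rw [Finset.sum_congr rfl hsum, mul_sub, Finset.mul_sum]
    have h5 : n + 1 - (n + 1) = 0 := by omega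
    rw [h5]
    push_cast
    ring

lemma Drec (m : ℕ) (hm : 1 ≤ m) (x : ℝ) (u : ℕ → ℝ) :
    DgB (m + 1) x u = gB m x u + x * DgB m x u := by
  have h1 : (fun s => gB (m + 1) s u)
      = fun s => s * gB m s u - ((m : ℝ) - 1) * u (m - 1) :=
    funext fun s => grec m hm s u
  have h2 : HasDerivAt (fun s => gB (m + 1) s u) (gB m x u + x * DgB m x u) x := by
    rw [h1]
    have := ((hasDerivAt_id x).mul (hasDerivAt_gB m x u)).sub_const
      (((m : ℝ) - 1) * u (m - 1))
    refine this.congr_deriv ?_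
    simp only [id_eq]
    ring
  exact (hasDerivAt_gB (m + 1) x u).unique h2

lemma Srec (m : ℕ) (hm : 1 ≤ m) (x y : ℝ) (u : ℕ → ℝ) :
    SB (m + 1) x y u = x * SB m x y u - ((m : ℝ) - 1) * gB (m - 1) y u := by
  obtain ⟨n, rfl⟩ : ∃ n, m = n + 1 := ⟨m - 1, by omega⟩
  cases n with
  | zero => simp [SB]
  | succ n =>
    unfold SB
    have h1 : n + 1 + 1 + 1 - 2 = n + 1 := by omega
    have h2 : n + 1 + 1 - 2 = n := by omega
    rw [h1, h2, Finset.sum_Icc_succ_top (by omega : 1 ≤ n + 1)]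
    have hsum : ∀ k ∈ Finset.Icc 1 n,
        (-((k : ℝ) * x ^ (n + 1 - k))) * gB k y u
          = x * ((-((k : ℝ) * x ^ (n - k))) * gB k y u) := by
      intro k hk
      have hk' : k ≤ n := (Finset.mem_Icc.mp hk).2
      have : n + 1 - k = (n - k) + 1 := by omega
      rw [this, pow_succ]
      ring
    rw [Finset.sum_congr rfl hsum, Finset.mul_sum]
    have h5 : n + 1 - (n + 1) = 0 := by omega
    have h6 : n + 1 + 1 - 1 = n + 1 := by omega
    rw [h5, h6]
    push_cast
    ring

lemma keyQ : ∀ m : ℕ, 1 ≤ m → ∀ x y : ℝ, ∀ u : ℕ → ℝ,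
    -(x - y) * DgB m x u + (x - y) ^ 2 * SB m x y u + 2 * gB m x u
      = gB m x u + gB m y u
        + ((m : ℝ) - 1) * (x - y) * (gB (m - 1) y u - gB (m - 1) x u) := by
  intro m hm
  induction m, hm using Nat.le_induction with
  | base =>
    intro x y u
    simp [gB, DgB, SB]
    norm_num
  | succ m hm ih =>
    intro x y u
    have hx := grec m hm x u
    have hy := grec m hm y u
    have hD := Drec m hm x u
    have hS := Srec m hm x y u
    have hcast : ((m + 1 : ℕ) : ℝ) - 1 = (m : ℝ) := by push_cast; ring
    have hsub : (m + 1 : ℕ) - 1 = m := by omega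
    have hg : ((m : ℝ) - 1) * (y * gB (m - 1) y u - x * gB (m - 1) x u)
        = ((m : ℝ) - 1) * (gB m y u - gB m x u) := by
      rcases Nat.lt_or_ge m 2 with h2 | h2
      · have : m = 1 := by omega
        subst this
        norm_num
      · have hm1 : 1 ≤ m - 1 := by omega
        have hmm : (m - 1) + 1 = m := by omega
        have hgx := grec (m - 1) hm1 x u
        have hgy := grec (m - 1) hm1 y u
        rw [hmm] at hgx hgy
        have hc : ((m - 1 : ℕ) : ℝ) = (m : ℝ) - 1 := by
          rw [Nat.cast_sub hm, Nat.cast_one]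
        rw [hc] at hgx hgy
        rw [hgx, hgy]
        ring
    rw [hx, hy, hD, hS, hcast, hsub]
    linear_combination x * ih x y u + (x - y) * hg

lemma EB_closed (m : ℕ) (hm : 1 ≤ m) (x y : ℝ) (hxy : x ≠ y) (u : ℕ → ℝ) :
    EB m x y u
      = (gB m x u + gB m y u
          + ((m : ℝ) - 1) * (x - y) * (gB (m - 1) y u - gB (m - 1) x u)) / (x - y) ^ 2 := by
  unfold EB
  rw [deriv_gB, sum_eq_SB]
  have h := keyQ m hm x y u
  have hxy1 : x - y ≠ 0 := sub_ne_zero.mpr hxy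
  have hxy2 : y - x ≠ 0 := sub_ne_zero.mpr (Ne.symm hxy)
  have e1 : DgB m x u / (y - x) + SB m x y u + 2 * gB m x u / (x - y) ^ 2
      = (-(x - y) * DgB m x u + (x - y) ^ 2 * SB m x y u + 2 * gB m x u) / (x - y) ^ 2 := by
    field_simp
    ring
  rw [e1, h]

theorem stmt_19 :
    ∀ m : ℕ, 1 ≤ m → ∀ x y : ℝ, x ≠ y → ∀ u : ℕ → ℝ,
      EB m x y u = EB m y x u := by
  intro m hm x y hxy u
  rw [EB_closed m hm x y hxy u, EB_closed m hm y x (Ne.symm hxy) u]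
  rw [show (y - x) ^ 2 = (x - y) ^ 2 by ring]
  congr 1
  ring
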